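/- Suppose the differentiator error system ẋᵢ = x_{i+1} + φᵢ(t, x₁ + η₁(t)) (i = 1,…,n-1), ẋₙ = d(t) + φₙ(t, x₁ + η₁(t)) on [0,T), n ≥ 2, has an absolute deadline at T (with η₁ ≡ 0). Then for every η̄ > 0 and ε > 0 there exists a Lipschitz continuous noise η₁ : [0,T) → [-η̄, η̄] such that every corresponding solution satisfies ‖lim_{t→T⁻} x(t)‖ ≥ ε. In particular, the noise η₁(t) = -η̄ for t < s and η₁(t) = -η̄ + (t-s)ε for t ∈ [s,T), with s = T - 2η̄/ε, forces lim_{t→T⁻} x₂(t) = -ε. -/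

import Mathlib

open Set Filter

/-- A solution, on `[s,T)`, of the differentiator error system
    ẋᵢ = x_{i+1} + φᵢ(t, x₁ + η₁(t)) (i < n), ẋₙ = d(t) + φₙ(t, x₁ + η₁(t)). -/
def DiffSol (n : ℕ) (hn : 0 < n) (T : ℝ)
    (φ : Fin n → ℝ → ℝ → ℝ) (d : ℝ → ℝ) (η₁ : ℝ → ℝ) (s : ℝ)
    (x : ℝ → EuclideanSpace ℝ (Fin n)) : Prop :=
  ∀ t ∈ Set.Ico s T,
    (∀ i : Fin n, ∀ h : (i : ℕ) + 1 < n,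
      HasDerivAt (fun τ => x τ i)
        (x t ⟨(i : ℕ) + 1, h⟩ + φ i t (x t ⟨0, hn⟩ + η₁ t)) t) ∧
    HasDerivAt (fun τ => x τ ⟨n - 1, Nat.sub_lt hn one_pos⟩)
      (d t + φ ⟨n - 1, Nat.sub_lt hn one_pos⟩ t (x t ⟨0, hn⟩ + η₁ t)) t

/-- Absolute deadline at `T` (with η₁ ≡ 0). -/
def DiffAbsDeadline (n : ℕ) (hn : 0 < n) (T : ℝ)
    (φ : Fin n → ℝ → ℝ → ℝ) (d : ℝ → ℝ) : Prop :=
  ∀ s ∈ Set.Ico (0:ℝ) T, ∀ x : ℝ → EuclideanSpace ℝ (Fin n),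
    DiffSol n hn T φ d (fun _ => 0) s x →
    Filter.Tendsto x (nhdsWithin T (Set.Iio T)) (nhds 0)

lemma coord_abs_le_norm {n : ℕ} (v : EuclideanSpace ℝ (Fin n)) (i : Fin n) :
    |v i| ≤ ‖v‖ := by
  rw [EuclideanSpace.norm_eq]
  have h1 : |v i| = Real.sqrt (‖v i‖ ^ 2) := by
    rw [Real.sqrt_sq_eq_abs, abs_norm, Real.norm_eq_abs]
  rw [h1]
  exact Real.sqrt_le_sqrt (Finset.single_le_sum (f := fun j => ‖v j‖ ^ 2)
    (fun j _ => sq_nonneg _) (Finset.mem_univ i))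

lemma core (n : ℕ) (hn : 2 ≤ n) (T : ℝ) (hT : 0 < T)
    (φ : Fin n → ℝ → ℝ → ℝ) (d : ℝ → ℝ)
    (habs : DiffAbsDeadline n (by linarith) T φ d)
    (η' ε : ℝ) (hη' : 0 < η') (hε : 0 < ε) (hsT : 2 * η' / ε ≤ T)
    (η₁ : ℝ → ℝ)
    (hform : ∀ t, T - 2 * η' / ε < t → η₁ t = -η' + (t - (T - 2 * η' / ε)) * ε)
    (x : ℝ → EuclideanSpace ℝ (Fin n))
    (hx : DiffSol n (by linarith) T φ d η₁ 0 x) :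
    ∃ L : EuclideanSpace ℝ (Fin n),
      Tendsto x (nhdsWithin T (Set.Iio T)) (nhds L) ∧
      L ⟨1, by linarith⟩ = -ε ∧ ε ≤ ‖L‖ := by
  have hn0 : 0 < n := by linarith
  set s : ℝ := T - 2 * η' / ε with hs_def
  have hpos : 0 < 2 * η' / ε := by positivity
  have hs0 : 0 ≤ s := by simp only [hs_def]; linarith
  have hsT' : s < T := by simp only [hs_def]; linarith
  set w : ℝ → EuclideanSpace ℝ (Fin n) :=
    fun τ => EuclideanSpace.single (⟨0, hn0⟩ : Fin n) (η₁ τ)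
      + EuclideanSpace.single (⟨1, by linarith⟩ : Fin n) ε with hw_def
  set z : ℝ → EuclideanSpace ℝ (Fin n) := fun τ => x τ + w τ with hz_def
  have hη₁d : ∀ t, s < t → HasDerivAt η₁ ε t := by
    intro t ht
    have h1 : HasDerivAt (fun τ : ℝ => -η' + (τ - s) * ε) ε t := by
      simpa using (((hasDerivAt_id t).sub_const s).mul_const ε).const_add (-η')
    apply h1.congr_of_eventuallyEq
    filter_upwards [Ioi_mem_nhds ht] with τ hτ
    exact hform τ hτ
  have hz_eq : ∀ (j : Fin n) (τ : ℝ), z τ j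
      = x τ j + (if (j : ℕ) = 0 then η₁ τ else 0) + (if (j : ℕ) = 1 then ε else 0) := by
    intro j τ
    simp [hz_def, hw_def, PiLp.add_apply, EuclideanSpace.single_apply, Fin.ext_iff,
      add_assoc]
  have hzf0 : ∀ τ, z τ (⟨0, hn0⟩ : Fin n) = x τ ⟨0, hn0⟩ + η₁ τ := by
    intro τ; rw [hz_eq]; norm_num
  have hzf1 : ∀ (p : 1 < n) (τ : ℝ), z τ (⟨1, p⟩ : Fin n) = x τ ⟨1, p⟩ + ε := by
    intro p τ; rw [hz_eq]; norm_num
  have hzfk : ∀ (j : Fin n), 2 ≤ (j : ℕ) → ∀ τ, z τ j = x τ j := by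
    intro j hj τ; rw [hz_eq, if_neg (by omega), if_neg (by omega)]; ring
  have hzsol : DiffSol n hn0 T φ d (fun _ => 0) ((s + T) / 2) z := by
    intro t ht
    have hts : s < t := lt_of_lt_of_le (by linarith) ht.1
    have htT : t < T := ht.2
    obtain ⟨hxd, hxn⟩ := hx t ⟨by linarith, htT⟩
    simp only [add_zero]
    constructor
    · intro i h
      have hD : HasDerivAt
          (fun τ => (if (i : ℕ) = 0 then η₁ τ else 0) + (if (i : ℕ) = 1 then ε else 0))
          (if (i : ℕ) = 0 then ε else 0) t := by
        by_cases h0 : (i : ℕ) = 0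
        · simp only [if_pos h0, if_neg (show ¬(i : ℕ) = 1 by omega)]
          exact (hη₁d t hts).add_const 0
        · simp only [if_neg h0]
          exact hasDerivAt_const t _
      have hmain := (hxd i h).add hD
      convert hmain using 1
      · rfl
      · rfl
      · funext τ
        simp [hz_eq, add_assoc]
      · simp only [hz_eq]
        by_cases h0 : (i : ℕ) = 0 <;> simp [h0] <;> ring
    · have hD2 : HasDerivAt
          (fun τ => (if n - 1 = 0 then η₁ τ else 0) + (if n - 1 = 1 then ε else 0))
          0 t := by
        simp only [if_neg (show ¬n - 1 = 0 by omega)]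
        exact hasDerivAt_const t _
      have hmain := hxn.add hD2
      convert hmain using 1
      · rfl
      · rfl
      · funext τ
        simp [hz_eq, add_assoc]
      · simp only [hz_eq]
        simp
  have hz0 : Tendsto z (nhdsWithin T (Set.Iio T)) (nhds 0) :=
    habs ((s + T) / 2) ⟨by linarith, by linarith⟩ z hzsol
  have hηlim : Tendsto η₁ (nhdsWithin T (Set.Iio T)) (nhds η') := by
    have haff : Tendsto (fun τ : ℝ => -η' + (τ - s) * ε) (nhdsWithin T (Set.Iio T))
        (nhds η') := by
      have hc : Tendsto (fun τ : ℝ => -η' + (τ - s) * ε) (nhds T)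
          (nhds (-η' + (T - s) * ε)) := by
        apply Continuous.tendsto; fun_prop
      have hval : -η' + (T - s) * ε = η' := by
        have : (T - s) * ε = 2 * η' := by
          rw [hs_def]; field_simp; ring
        linarith
      have h2 := hc.mono_left (nhdsWithin_le_nhds (s := Set.Iio T))
      rwa [hval] at h2
    refine Tendsto.congr' ?_ haff
    filter_upwards [mem_nhdsWithin_of_mem_nhds (Ioi_mem_nhds hsT')] with τ hτ
    exact (hform τ hτ).symm
  have hcont : Continuous fun a : ℝ =>
      (EuclideanSpace.single (⟨0, hn0⟩ : Fin n) a : EuclideanSpace ℝ (Fin n)) := by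
    have e : (fun a : ℝ =>
        (EuclideanSpace.single (⟨0, hn0⟩ : Fin n) a : EuclideanSpace ℝ (Fin n)))
        = fun a => a • EuclideanSpace.single (⟨0, hn0⟩ : Fin n) (1 : ℝ) := by
      funext a
      ext j
      simp [EuclideanSpace.single_apply, PiLp.smul_apply]
    rw [e]
    exact continuous_id.smul continuous_const
  have hwlim : Tendsto w (nhdsWithin T (Set.Iio T))
      (nhds (EuclideanSpace.single (⟨0, hn0⟩ : Fin n) η'
        + EuclideanSpace.single (⟨1, by linarith⟩ : Fin n) ε)) := by
    rw [hw_def]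
    exact ((hcont.tendsto η').comp hηlim).add tendsto_const_nhds
  have hxeq : x = fun τ => z τ - w τ := by
    funext τ; simp [hz_def]
  have hxlim : Tendsto x (nhdsWithin T (Set.Iio T))
      (nhds (0 - (EuclideanSpace.single (⟨0, hn0⟩ : Fin n) η'
        + EuclideanSpace.single (⟨1, by linarith⟩ : Fin n) ε))) := by
    rw [hxeq]; exact hz0.sub hwlim
  refine ⟨_, hxlim, ?_, ?_⟩
  · simp [PiLp.sub_apply, PiLp.add_apply, EuclideanSpace.single_apply, Fin.ext_iff]
  · have hcoord := coord_abs_le_norm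
      (0 - (EuclideanSpace.single (⟨0, hn0⟩ : Fin n) η'
        + EuclideanSpace.single (⟨1, by linarith⟩ : Fin n) ε)) ⟨1, by linarith⟩
    have hval : ((0 : EuclideanSpace ℝ (Fin n))
        - (EuclideanSpace.single (⟨0, hn0⟩ : Fin n) η'
        + EuclideanSpace.single (⟨1, by linarith⟩ : Fin n) ε)) ⟨1, by linarith⟩ = -ε := by
      simp [PiLp.sub_apply, PiLp.add_apply, EuclideanSpace.single_apply, Fin.ext_iff]
    rw [hval] at hcoord
    rw [abs_neg, abs_of_pos hε] at hcoord
    exact hcoord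

/-- Theorem 2(ii): under an absolute deadline at `T`, for all
    η̄, ε > 0 there is a Lipschitz noise η₁ bounded by η̄ such that every
    corresponding solution has a limit of norm at least ε at T⁻.  In particular,
    when 2η̄/ε ≤ T, the noise η₁(t) = -η̄ for t < s and η₁(t) = -η̄ + (t-s)ε for
    t ≥ s, with s = T - 2η̄/ε, forces x₂(t) → -ε. -/
theorem stmt8 (n : ℕ) (hn : 2 ≤ n) (T : ℝ) (hT : 0 < T)
    (φ : Fin n → ℝ → ℝ → ℝ) (d : ℝ → ℝ)
    (habs : DiffAbsDeadline n (by omega) T φ d) :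
    ∀ η' > (0:ℝ), ∀ ε > (0:ℝ),
      (∃ η₁ : ℝ → ℝ, (∃ K : NNReal, LipschitzOnWith K η₁ (Set.Ico 0 T)) ∧
        (∀ t ∈ Set.Ico (0:ℝ) T, |η₁ t| ≤ η') ∧
        (∀ x : ℝ → EuclideanSpace ℝ (Fin n),
          DiffSol n (by omega) T φ d η₁ 0 x →
          ∃ L : EuclideanSpace ℝ (Fin n),
            Filter.Tendsto x (nhdsWithin T (Set.Iio T)) (nhds L) ∧ ε ≤ ‖L‖)) ∧
      (2 * η' / ε ≤ T →
        ∀ x : ℝ → EuclideanSpace ℝ (Fin n),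
          DiffSol n (by omega) T φ d
            (fun t => if t < T - 2 * η' / ε then -η'
              else -η' + (t - (T - 2 * η' / ε)) * ε) 0 x →
          Filter.Tendsto (fun t => x t ⟨1, by omega⟩)
            (nhdsWithin T (Set.Iio T)) (nhds (-ε))) := by
  intro η' hη' ε hε
  constructor
  · -- existence of a noise for arbitrary η', ε
    set ε' : ℝ := max ε (2 * η' / T) with hε'_def
    have hε'pos : 0 < ε' := lt_of_lt_of_le hε (le_max_left _ _)
    have hle : 2 * η' / ε' ≤ T := by
      rw [div_le_iff₀ hε'pos]
      have h1 : 2 * η' / T ≤ ε' := le_max_right _ _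
      have h2 : 2 * η' / T * T ≤ ε' * T := mul_le_mul_of_nonneg_right h1 hT.le
      have h3 : 2 * η' / T * T = 2 * η' := by field_simp
      linarith
    set s : ℝ := T - 2 * η' / ε' with hs_def
    set η₁ : ℝ → ℝ := fun t => max (-η' + (t - s) * ε') (-η') with hη₁_def
    have hform : ∀ t, s < t → η₁ t = -η' + (t - s) * ε' := by
      intro t ht
      apply max_eq_left
      nlinarith
    refine ⟨η₁, ⟨Real.toNNReal ε', ?_⟩, ?_, ?_⟩
    · apply LipschitzWith.lipschitzOnWith
      apply LipschitzWith.of_dist_le_mul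
      intro a b
      rw [Real.dist_eq, Real.dist_eq, Real.coe_toNNReal _ hε'pos.le]
      calc |η₁ a - η₁ b| ≤ |(-η' + (a - s) * ε') - (-η' + (b - s) * ε')| :=
            abs_max_sub_max_le_abs _ _ _
        _ = ε' * |a - b| := by
            rw [show (-η' + (a - s) * ε') - (-η' + (b - s) * ε') = ε' * (a - b) by ring,
              abs_mul, abs_of_pos hε'pos]
    · intro t ht
      rw [abs_le]
      constructor
      · exact le_max_right _ _
      · apply max_le _ (by linarith)
        have h1 : t - s ≤ T - s := by have := ht.2; linarith
        have h2 : (T - s) * ε' = 2 * η' := by rw [hs_def]; field_simp; ring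
        nlinarith
    · intro x hx
      obtain ⟨L, hL, -, hnorm⟩ :=
        core n hn T hT φ d habs η' ε' hη' hε'pos hle η₁ hform x hx
      exact ⟨L, hL, le_trans (le_max_left _ _) hnorm⟩
  · -- the specific piecewise-linear noise
    intro hle x hx
    have hform : ∀ t, T - 2 * η' / ε < t →
        (fun t => if t < T - 2 * η' / ε then -η'
          else -η' + (t - (T - 2 * η' / ε)) * ε) t
        = -η' + (t - (T - 2 * η' / ε)) * ε := by
      intro t ht
      simp only [if_neg (not_lt.mpr ht.le)]
    obtain ⟨L, hL, hL1, -⟩ :=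
      core n hn T hT φ d habs η' ε hη' hε hle _ hform x hx
    rw [show (-ε) = L ⟨1, by omega⟩ from hL1.symm]
    rw [tendsto_iff_norm_sub_tendsto_zero]
    have hnz := tendsto_iff_norm_sub_tendsto_zero.mp hL
    apply squeeze_zero (fun t => norm_nonneg _) _ hnz
    intro t
    have heq : x t ⟨1, by omega⟩ - L ⟨1, by omega⟩ = (x t - L) ⟨1, by omega⟩ :=
      (PiLp.sub_apply _ _ _ _).symm
    rw [Real.norm_eq_abs, heq]
    exact le_trans (coord_abs_le_norm _ _) (le_of_eq rfl)
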